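/- Every element g of G_BF can be written as g = p · b · q^{−1}, where p and q belong to the submonoid of G_BF generated by {x_i : i ≥ 0} and b belongs to the subgroup of G_BF generated by all of the α_{ij} and β_{ij}. -/

import Mathlib

/-- Relator corresponding to the equation `u = v`. -/
def grel {α : Type*} (u v : FreeGroup α) : FreeGroup α := u * v⁻¹

/-- Generators of the pure braided Thompson group `BF`.  `a i k` denotes
`α_{i+1, i+k+2}` and `b i k` denotes `β_{i+1, i+k+2}` (so that exactly the
generators `α_{ij}, β_{ij}` with `1 ≤ i < j` occur). -/
inductive BFGen : Type
  | x : ℕ → BFGen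
  | a : ℕ → ℕ → BFGen
  | b : ℕ → ℕ → BFGen

namespace BFGen

/-- The free-group letter `x_i`. -/
def X (i : ℕ) : FreeGroup BFGen := FreeGroup.of (BFGen.x i)

/-- The free-group letter `α_{ij}` (meaningful for `1 ≤ i < j`). -/
def A (i j : ℕ) : FreeGroup BFGen := FreeGroup.of (BFGen.a (i - 1) (j - i - 1))

/-- The free-group letter `β_{ij}` (meaningful for `1 ≤ i < j`). -/
def B (i j : ℕ) : FreeGroup BFGen := FreeGroup.of (BFGen.b (i - 1) (j - i - 1))

/-- The defining relations of `BF`. -/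
def bfRels : Set (FreeGroup BFGen) :=
  { g |
    -- (A)
    (∃ i j, i < j ∧ g = grel (X j * X i) (X i * X (j + 1))) ∨
    -- (B1)
    (∃ r s i j, 1 ≤ r ∧ r < s ∧ ((s < i ∧ i < j) ∨ (1 ≤ i ∧ i < r ∧ s < j)) ∧
      g = grel ((A r s)⁻¹ * A i j * A r s) (A i j)) ∨
    -- (B2) (s = i)
    (∃ r s j, 1 ≤ r ∧ r < s ∧ s < j ∧
      g = grel ((A r s)⁻¹ * A s j * A r s) (A r j * A s j * (A r j)⁻¹)) ∨
    -- (B3) (r = i)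
    (∃ i s j, 1 ≤ i ∧ i < s ∧ s < j ∧
      g = grel ((A i s)⁻¹ * A i j * A i s)
        ((A i j * A s j) * A i j * (A i j * A s j)⁻¹)) ∨
    -- (B4)
    (∃ r i s j, 1 ≤ r ∧ r < i ∧ i < s ∧ s < j ∧
      g = grel ((A r s)⁻¹ * A i j * A r s)
        ((A r j * A s j * (A r j)⁻¹ * (A s j)⁻¹) * A i j *
          (A r j * A s j * (A r j)⁻¹ * (A s j)⁻¹)⁻¹)) ∨
    -- (B5)
    (∃ r s i j, 1 ≤ r ∧ r < s ∧ ((s < i ∧ i < j) ∨ (1 ≤ i ∧ i < r ∧ s < j)) ∧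
      g = grel ((A r s)⁻¹ * B i j * A r s) (B i j)) ∨
    -- (B6) (s = i)
    (∃ r s j, 1 ≤ r ∧ r < s ∧ s < j ∧
      g = grel ((A r s)⁻¹ * B s j * A r s) (B r j * B s j * (B r j)⁻¹)) ∨
    -- (B7) (r = i)
    (∃ i s j, 1 ≤ i ∧ i < s ∧ s < j ∧
      g = grel ((A i s)⁻¹ * B i j * A i s)
        ((B i j * B s j) * B i j * (B i j * B s j)⁻¹)) ∨
    -- (B8)
    (∃ r i s j, 1 ≤ r ∧ r < i ∧ i < s ∧ s < j ∧
      g = grel ((A r s)⁻¹ * B i j * A r s)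
        ((B r j * B s j * (B r j)⁻¹ * (B s j)⁻¹) * B i j *
          (B r j * B s j * (B r j)⁻¹ * (B s j)⁻¹)⁻¹)) ∨
    -- (C)
    (∃ i j, 1 ≤ i ∧ i < j ∧ g = grel (B i j) (B i (j + 1) * A i j)) ∨
    -- (D1) (k < i - 1)
    (∃ i j k, 1 ≤ i ∧ i < j ∧ k + 1 < i ∧
      g = grel (A i j * X k) (X k * A (i + 1) (j + 1))) ∨
    -- (D2) (k = i - 1)
    (∃ i j, 1 ≤ i ∧ i < j ∧
      g = grel (A i j * X (i - 1)) (X (i - 1) * A (i + 1) (j + 1) * A i (j + 1))) ∨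
    -- (D3) (i - 1 < k < j - 1)
    (∃ i j k, 1 ≤ i ∧ i < j ∧ i ≤ k ∧ k + 1 < j ∧
      g = grel (A i j * X k) (X k * A i (j + 1))) ∨
    -- (D4) (k = j - 1)
    (∃ i j, 1 ≤ i ∧ i < j ∧
      g = grel (A i j * X (j - 1)) (X (j - 1) * A i (j + 1) * A i j)) ∨
    -- (D5) (k > j - 1)
    (∃ i j k, 1 ≤ i ∧ i < j ∧ j ≤ k ∧ g = grel (A i j * X k) (X k * A i j)) ∨
    -- (D6) (k < i - 1)
    (∃ i j k, 1 ≤ i ∧ i < j ∧ k + 1 < i ∧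
      g = grel (B i j * X k) (X k * B (i + 1) (j + 1))) ∨
    -- (D7) (k = i - 1)
    (∃ i j, 1 ≤ i ∧ i < j ∧
      g = grel (B i j * X (i - 1)) (X (i - 1) * B (i + 1) (j + 1) * B i (j + 1))) ∨
    -- (D8) (i - 1 < k < j - 1)
    (∃ i j k, 1 ≤ i ∧ i < j ∧ i ≤ k ∧ k + 1 < j ∧
      g = grel (B i j * X k) (X k * B i (j + 1))) ∨
    -- (D9) (k ≥ j - 1)
    (∃ i j k, 1 ≤ i ∧ i < j ∧ j ≤ k + 1 ∧
      g = grel (B i j * X k) (X k * B i j)) }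

end BFGen

/-- The pure braided Thompson group `BF`, via its infinite presentation. -/
abbrev GBF : Type := PresentedGroup BFGen.bfRels

namespace GBF

/-- The generator `x_i` of `BF`. -/
def xg (i : ℕ) : GBF := PresentedGroup.of (BFGen.x i)

/-- The generator `α_{ij}` of `BF` (meaningful for `1 ≤ i < j`). -/
def ag (i j : ℕ) : GBF := PresentedGroup.of (BFGen.a (i - 1) (j - i - 1))

/-- The generator `β_{ij}` of `BF` (meaningful for `1 ≤ i < j`). -/
def bg (i j : ℕ) : GBF := PresentedGroup.of (BFGen.b (i - 1) (j - i - 1))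

end GBF

namespace BFProof

open BFGen GBF

/-- The quotient map as a monoid hom. -/
def mk : FreeGroup BFGen →* GBF := PresentedGroup.mk BFGen.bfRels

lemma mk_X (i : ℕ) : mk (X i) = xg i := rfl
lemma mk_A (i j : ℕ) : mk (A i j) = ag i j := rfl
lemma mk_B (i j : ℕ) : mk (B i j) = bg i j := rfl

lemma mk_rel {u v : FreeGroup BFGen} (h : grel u v ∈ BFGen.bfRels) : mk u = mk v := by
  have h1 : mk (grel u v) = 1 :=
    (QuotientGroup.eq_one_iff _).2 (Subgroup.subset_normalClosure h)
  have h2 : mk u * (mk v)⁻¹ = 1 := by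
    simpa [grel, map_mul, map_inv] using h1
  exact mul_inv_eq_one.mp h2

/-- Relation (A). -/
lemma rel_x {i j : ℕ} (h : i < j) : xg j * xg i = xg i * xg (j + 1) := by
  have := mk_rel (Or.inl ⟨i, j, h, rfl⟩)
  simpa [map_mul, mk_X] using this

/-- Relation (D1). -/
lemma rel_d1 {i j k : ℕ} (h1 : 1 ≤ i) (h2 : i < j) (h3 : k + 1 < i) :
    ag i j * xg k = xg k * ag (i + 1) (j + 1) := by
  have := mk_rel (show grel (A i j * X k) (X k * A (i + 1) (j + 1)) ∈ BFGen.bfRels from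
    Or.inr <| Or.inr <| Or.inr <| Or.inr <| Or.inr <| Or.inr <| Or.inr <| Or.inr <| Or.inr <|
    Or.inr <| Or.inl ⟨i, j, k, h1, h2, h3, rfl⟩)
  simpa [map_mul, mk_X, mk_A] using this

/-- Relation (D2). -/
lemma rel_d2 {i j : ℕ} (h1 : 1 ≤ i) (h2 : i < j) :
    ag i j * xg (i - 1) = xg (i - 1) * (ag (i + 1) (j + 1) * ag i (j + 1)) := by
  have := mk_rel (show grel (A i j * X (i - 1))
      (X (i - 1) * A (i + 1) (j + 1) * A i (j + 1)) ∈ BFGen.bfRels from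
    Or.inr <| Or.inr <| Or.inr <| Or.inr <| Or.inr <| Or.inr <| Or.inr <| Or.inr <| Or.inr <|
    Or.inr <| Or.inr <| Or.inl ⟨i, j, h1, h2, rfl⟩)
  simpa [map_mul, mk_X, mk_A, mul_assoc] using this

/-- Relation (D3). -/
lemma rel_d3 {i j k : ℕ} (h1 : 1 ≤ i) (h2 : i < j) (h3 : i ≤ k) (h4 : k + 1 < j) :
    ag i j * xg k = xg k * ag i (j + 1) := by
  have := mk_rel (show grel (A i j * X k) (X k * A i (j + 1)) ∈ BFGen.bfRels from
    Or.inr <| Or.inr <| Or.inr <| Or.inr <| Or.inr <| Or.inr <| Or.inr <| Or.inr <| Or.inr <|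
    Or.inr <| Or.inr <| Or.inr <| Or.inl ⟨i, j, k, h1, h2, h3, h4, rfl⟩)
  simpa [map_mul, mk_X, mk_A] using this

/-- Relation (D4). -/
lemma rel_d4 {i j : ℕ} (h1 : 1 ≤ i) (h2 : i < j) :
    ag i j * xg (j - 1) = xg (j - 1) * (ag i (j + 1) * ag i j) := by
  have := mk_rel (show grel (A i j * X (j - 1))
      (X (j - 1) * A i (j + 1) * A i j) ∈ BFGen.bfRels from
    Or.inr <| Or.inr <| Or.inr <| Or.inr <| Or.inr <| Or.inr <| Or.inr <| Or.inr <| Or.inr <|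
    Or.inr <| Or.inr <| Or.inr <| Or.inr <| Or.inl ⟨i, j, h1, h2, rfl⟩)
  simpa [map_mul, mk_X, mk_A, mul_assoc] using this

/-- Relation (D5). -/
lemma rel_d5 {i j k : ℕ} (h1 : 1 ≤ i) (h2 : i < j) (h3 : j ≤ k) :
    ag i j * xg k = xg k * ag i j := by
  have := mk_rel (show grel (A i j * X k) (X k * A i j) ∈ BFGen.bfRels from
    Or.inr <| Or.inr <| Or.inr <| Or.inr <| Or.inr <| Or.inr <| Or.inr <| Or.inr <| Or.inr <|
    Or.inr <| Or.inr <| Or.inr <| Or.inr <| Or.inr <| Or.inl ⟨i, j, k, h1, h2, h3, rfl⟩)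
  simpa [map_mul, mk_X, mk_A] using this

/-- Relation (D6). -/
lemma rel_d6 {i j k : ℕ} (h1 : 1 ≤ i) (h2 : i < j) (h3 : k + 1 < i) :
    bg i j * xg k = xg k * bg (i + 1) (j + 1) := by
  have := mk_rel (show grel (B i j * X k) (X k * B (i + 1) (j + 1)) ∈ BFGen.bfRels from
    Or.inr <| Or.inr <| Or.inr <| Or.inr <| Or.inr <| Or.inr <| Or.inr <| Or.inr <| Or.inr <|
    Or.inr <| Or.inr <| Or.inr <| Or.inr <| Or.inr <| Or.inr <| Or.inl ⟨i, j, k, h1, h2, h3, rfl⟩)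
  simpa [map_mul, mk_X, mk_B] using this

/-- Relation (D7). -/
lemma rel_d7 {i j : ℕ} (h1 : 1 ≤ i) (h2 : i < j) :
    bg i j * xg (i - 1) = xg (i - 1) * (bg (i + 1) (j + 1) * bg i (j + 1)) := by
  have := mk_rel (show grel (B i j * X (i - 1))
      (X (i - 1) * B (i + 1) (j + 1) * B i (j + 1)) ∈ BFGen.bfRels from
    Or.inr <| Or.inr <| Or.inr <| Or.inr <| Or.inr <| Or.inr <| Or.inr <| Or.inr <| Or.inr <|
    Or.inr <| Or.inr <| Or.inr <| Or.inr <| Or.inr <| Or.inr <| Or.inr <| Or.inl ⟨i, j, h1, h2, rfl⟩)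
  simpa [map_mul, mk_X, mk_B, mul_assoc] using this

/-- Relation (D8). -/
lemma rel_d8 {i j k : ℕ} (h1 : 1 ≤ i) (h2 : i < j) (h3 : i ≤ k) (h4 : k + 1 < j) :
    bg i j * xg k = xg k * bg i (j + 1) := by
  have := mk_rel (show grel (B i j * X k) (X k * B i (j + 1)) ∈ BFGen.bfRels from
    Or.inr <| Or.inr <| Or.inr <| Or.inr <| Or.inr <| Or.inr <| Or.inr <| Or.inr <| Or.inr <|
    Or.inr <| Or.inr <| Or.inr <| Or.inr <| Or.inr <| Or.inr <| Or.inr <| Or.inr <|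
    Or.inl ⟨i, j, k, h1, h2, h3, h4, rfl⟩)
  simpa [map_mul, mk_X, mk_B] using this

/-- Relation (D9). -/
lemma rel_d9 {i j k : ℕ} (h1 : 1 ≤ i) (h2 : i < j) (h3 : j ≤ k + 1) :
    bg i j * xg k = xg k * bg i j := by
  have := mk_rel (show grel (B i j * X k) (X k * B i j) ∈ BFGen.bfRels from
    Or.inr <| Or.inr <| Or.inr <| Or.inr <| Or.inr <| Or.inr <| Or.inr <| Or.inr <| Or.inr <|
    Or.inr <| Or.inr <| Or.inr <| Or.inr <| Or.inr <| Or.inr <| Or.inr <| Or.inr <| Or.inr <|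
    ⟨i, j, k, h1, h2, h3, rfl⟩)
  simpa [map_mul, mk_X, mk_B] using this

/-- The product of the positive generators indexed by a list. -/
def pos (l : List ℕ) : GBF := (l.map xg).prod

@[simp] lemma pos_nil : pos [] = 1 := rfl

@[simp] lemma pos_cons (k : ℕ) (l : List ℕ) : pos (k :: l) = xg k * pos l := by
  simp [pos]

@[simp] lemma pos_append (p q : List ℕ) : pos (p ++ q) = pos p * pos q := by
  simp [pos]

lemma pos_mem (l : List ℕ) : pos l ∈ Submonoid.closure (Set.range xg) := by
  induction l with
  | nil => exact Submonoid.one_mem _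
  | cons k l ih =>
    rw [pos_cons]
    exact mul_mem (Submonoid.subset_closure ⟨k, rfl⟩) ih

lemma mem_pos {g : GBF} (hg : g ∈ Submonoid.closure (Set.range xg)) :
    ∃ l : List ℕ, g = pos l := by
  induction hg using Submonoid.closure_induction with
  | mem x hx => obtain ⟨k, rfl⟩ := hx; exact ⟨[k], by simp⟩
  | one => exact ⟨[], rfl⟩
  | mul x y _ _ hx hy =>
    obtain ⟨lx, rfl⟩ := hx; obtain ⟨ly, rfl⟩ := hy
    exact ⟨lx ++ ly, by simp⟩

/-- The generating set of the subgroup of "braid-like" elements. -/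
def BSet : Set GBF := {h : GBF | ∃ i j, 1 ≤ i ∧ i < j ∧ (h = ag i j ∨ h = bg i j)}

/-- The subgroup of "braid-like" elements. -/
def BGrp : Subgroup GBF := Subgroup.closure BSet

lemma ag_mem {i j : ℕ} (h1 : 1 ≤ i) (h2 : i < j) : ag i j ∈ BGrp :=
  Subgroup.subset_closure ⟨i, j, h1, h2, Or.inl rfl⟩

lemma bg_mem {i j : ℕ} (h1 : 1 ≤ i) (h2 : i < j) : bg i j ∈ BGrp :=
  Subgroup.subset_closure ⟨i, j, h1, h2, Or.inr rfl⟩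

/-- Pushing a single braid generator through a single `x` generator. -/
lemma push_gen {h : GBF} (hh : h ∈ BSet) (k : ℕ) :
    ∃ c ∈ BGrp, h * xg k = xg k * c := by
  obtain ⟨i, j, h1, h2, hab⟩ := hh
  rcases hab with rfl | rfl
  · -- α case
    rcases lt_trichotomy (k + 1) i with hk | hk | hk
    · exact ⟨_, ag_mem (by omega) (by omega), rel_d1 h1 h2 hk⟩
    · have hki : k = i - 1 := by omega
      subst hki
      exact ⟨_, mul_mem (ag_mem (by omega) (by omega)) (ag_mem (by omega) (by omega)),
        rel_d2 h1 h2⟩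
    · rcases lt_trichotomy (k + 1) j with hj | hj | hj
      · exact ⟨_, ag_mem (by omega) (by omega), rel_d3 h1 h2 (by omega) hj⟩
      · have hkj : k = j - 1 := by omega
        subst hkj
        exact ⟨_, mul_mem (ag_mem (by omega) (by omega)) (ag_mem h1 h2), rel_d4 h1 h2⟩
      · exact ⟨_, ag_mem h1 h2, rel_d5 h1 h2 (by omega)⟩
  · -- β case
    rcases lt_trichotomy (k + 1) i with hk | hk | hk
    · exact ⟨_, bg_mem (by omega) (by omega), rel_d6 h1 h2 hk⟩
    · have hki : k = i - 1 := by omega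
      subst hki
      exact ⟨_, mul_mem (bg_mem (by omega) (by omega)) (bg_mem (by omega) (by omega)),
        rel_d7 h1 h2⟩
    · rcases lt_trichotomy (k + 1) j with hj | hj | hj
      · exact ⟨_, bg_mem (by omega) (by omega), rel_d8 h1 h2 (by omega) hj⟩
      · exact ⟨_, bg_mem h1 h2, rel_d9 h1 h2 (by omega)⟩
      · exact ⟨_, bg_mem h1 h2, rel_d9 h1 h2 (by omega)⟩

/-- Pushing any element of `BGrp` through a single `x` generator. -/
lemma push {b : GBF} (hb : b ∈ BGrp) (k : ℕ) :
    ∃ c ∈ BGrp, b * xg k = xg k * c := by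
  revert k
  induction hb using Subgroup.closure_induction with
  | mem x hx => exact fun k => push_gen hx k
  | one => exact fun k => ⟨1, one_mem _, by simp⟩
  | mul x y _ _ hx hy =>
    intro k
    obtain ⟨c, hc, hce⟩ := hx k
    obtain ⟨d, hd, hde⟩ := hy k
    refine ⟨c * d, mul_mem hc hd, ?_⟩
    rw [mul_assoc, hde, ← mul_assoc, hce, mul_assoc]
  | inv x _ hx =>
    intro k
    obtain ⟨c, hc, hce⟩ := hx k
    refine ⟨c⁻¹, inv_mem hc, ?_⟩
    rw [eq_comm, mul_inv_eq_iff_eq_mul, mul_assoc, ← hce, inv_mul_cancel_left]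

/-- Pushing any element of `BGrp` through any positive element. -/
lemma push_list {b : GBF} (hb : b ∈ BGrp) (l : List ℕ) :
    ∃ c ∈ BGrp, b * pos l = pos l * c := by
  induction l generalizing b hb with
  | nil => exact ⟨b, hb, by simp⟩
  | cons k l ih =>
    obtain ⟨c, hc, hce⟩ := push hb k
    obtain ⟨d, hd, hde⟩ := ih hc
    exact ⟨d, hd, by rw [pos_cons, ← mul_assoc, hce, mul_assoc, hde, mul_assoc]⟩

/-- Left-Ore-style lemma: a positive element and a generator have a common
right multiple with the generator on the left. -/
lemma oreL (q : List ℕ) : ∀ k : ℕ, ∃ r s : List ℕ, pos q * pos r = xg k * pos s := by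
  induction q with
  | nil => exact fun k => ⟨[k], [], by simp⟩
  | cons m q ih =>
    intro k
    rcases lt_trichotomy m k with hm | rfl | hm
    · obtain ⟨r, s, hrs⟩ := ih (k + 1)
      refine ⟨r, m :: s, ?_⟩
      rw [pos_cons, mul_assoc, hrs, pos_cons, ← mul_assoc, ← rel_x hm, mul_assoc]
    · exact ⟨[], q, by simp⟩
    · obtain ⟨r, s, hrs⟩ := ih k
      refine ⟨r, (m + 1) :: s, ?_⟩
      rw [pos_cons, mul_assoc, hrs, pos_cons, ← mul_assoc, rel_x hm, mul_assoc]

/-- Ore condition for the positive monoid. -/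
lemma ore (p : List ℕ) : ∀ q : List ℕ, ∃ a b : List ℕ, pos p * pos a = pos q * pos b := by
  induction p with
  | nil => exact fun q => ⟨q, [], by simp⟩
  | cons k p ih =>
    intro q
    obtain ⟨r, s, hrs⟩ := oreL q k
    obtain ⟨a, b, hab⟩ := ih s
    refine ⟨a, r ++ b, ?_⟩
    rw [pos_cons, mul_assoc, hab, ← mul_assoc, ← hrs, pos_append, mul_assoc]

/-- The factorization predicate. -/
def P (g : GBF) : Prop := ∃ p q : List ℕ, ∃ b ∈ BGrp, g = pos p * b * (pos q)⁻¹

lemma P_one : P 1 := ⟨[], [], 1, one_mem _, by simp⟩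

lemma P_of_BGrp {b : GBF} (hb : b ∈ BGrp) : P b := ⟨[], [], b, hb, by simp⟩

lemma P_inv {g : GBF} (hg : P g) : P g⁻¹ := by
  obtain ⟨p, q, b, hb, rfl⟩ := hg
  exact ⟨q, p, b⁻¹, inv_mem hb, by group⟩

lemma P_mul {g h : GBF} (hg : P g) (hh : P h) : P (g * h) := by
  obtain ⟨p, q, b, hb, rfl⟩ := hg
  obtain ⟨p', q', b', hb', rfl⟩ := hh
  obtain ⟨a, c, hac⟩ := ore p' q
  -- pos p' * pos a = pos q * pos c, so (pos q)⁻¹ * pos p' = pos c * (pos a)⁻¹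
  have key : (pos q)⁻¹ * pos p' = pos c * (pos a)⁻¹ := by
    rw [inv_mul_eq_iff_eq_mul, ← mul_assoc, eq_mul_inv_iff_mul_eq]
    exact hac
  obtain ⟨b1, hb1, hb1e⟩ := push_list hb c
  obtain ⟨b2, hb2, hb2e⟩ := push_list hb' a
  have h3 : (pos a)⁻¹ * b' = b2 * (pos a)⁻¹ := by
    rw [inv_mul_eq_iff_eq_mul, ← mul_assoc, eq_mul_inv_iff_mul_eq]
    exact hb2e
  refine ⟨p ++ c, q' ++ a, b1 * b2, mul_mem hb1 hb2, ?_⟩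
  rw [pos_append, pos_append, mul_inv_rev]
  calc pos p * b * (pos q)⁻¹ * (pos p' * b' * (pos q')⁻¹)
      = pos p * (b * ((pos q)⁻¹ * pos p')) * b' * (pos q')⁻¹ := by group
    _ = pos p * (b * (pos c * (pos a)⁻¹)) * b' * (pos q')⁻¹ := by rw [key]
    _ = pos p * (b * pos c) * ((pos a)⁻¹ * b') * (pos q')⁻¹ := by group
    _ = pos p * (pos c * b1) * (b2 * (pos a)⁻¹) * (pos q')⁻¹ := by rw [hb1e, h3]
    _ = pos p * pos c * (b1 * b2) * ((pos a)⁻¹ * (pos q')⁻¹) := by group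

lemma P_gen (z : BFGen) : P (mk (FreeGroup.of z)) := by
  cases z with
  | x i =>
    have e : mk (FreeGroup.of (BFGen.x i)) = xg i := rfl
    exact ⟨[i], [], 1, one_mem _, by rw [e]; simp⟩
  | a i k =>
    have e1 : i + 1 - 1 = i := by omega
    have e2 : i + k + 2 - (i + 1) - 1 = k := by omega
    have e : ag (i + 1) (i + k + 2) = mk (FreeGroup.of (BFGen.a i k)) := by
      show PresentedGroup.of (BFGen.a (i + 1 - 1) (i + k + 2 - (i + 1) - 1)) = _
      rw [e1, e2]; rfl
    rw [← e]
    exact P_of_BGrp (ag_mem (by omega) (by omega))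
  | b i k =>
    have e1 : i + 1 - 1 = i := by omega
    have e2 : i + k + 2 - (i + 1) - 1 = k := by omega
    have e : bg (i + 1) (i + k + 2) = mk (FreeGroup.of (BFGen.b i k)) := by
      show PresentedGroup.of (BFGen.b (i + 1 - 1) (i + k + 2 - (i + 1) - 1)) = _
      rw [e1, e2]; rfl
    rw [← e]
    exact P_of_BGrp (bg_mem (by omega) (by omega))

end BFProof

/-- Every element of `BF` factors as `p · b · q⁻¹` with `p, q` in the submonoid
generated by the `x_i` (positive elements of `F`) and `b` in the subgroup
generated by all the `α_{ij}` and `β_{ij}`. -/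
theorem bf_factorization (g : GBF) :
    ∃ p ∈ Submonoid.closure (Set.range GBF.xg),
    ∃ q ∈ Submonoid.closure (Set.range GBF.xg),
    ∃ b ∈ Subgroup.closure
        {h : GBF | ∃ i j, 1 ≤ i ∧ i < j ∧ (h = GBF.ag i j ∨ h = GBF.bg i j)},
      g = p * b * q⁻¹ := by
  obtain ⟨w, rfl⟩ := PresentedGroup.mk_surjective BFGen.bfRels g
  have hP : BFProof.P (BFProof.mk w) := by
    induction w using FreeGroup.induction_on with
    | C1 => simpa using BFProof.P_one
    | of z => exact BFProof.P_gen z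
    | inv_of z hz => rw [map_inv]; exact BFProof.P_inv hz
    | mul u v hu hv => rw [map_mul]; exact BFProof.P_mul hu hv
  obtain ⟨p, q, b, hb, he⟩ := hP
  exact ⟨BFProof.pos p, BFProof.pos_mem p, BFProof.pos q, BFProof.pos_mem q, b, hb, he⟩
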